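/- Let G be a discrete group, I a nonempty set, T = I × G × I, and S = B(I,G). Define Ψ : ℓ¹(T) → ℓ¹(S) by Ψ(b)(t) := b(t) for t ∈ T and Ψ(b)(o) := −Σ_{s∈T} b(s), and Φ : ℓ¹(S) → ℂ by Φ(a) := Σ_{s∈S} a(s). Then Ψ and Φ are continuous algebra homomorphisms and the sequence 0 → ℓ¹(T) → ℓ¹(S) → ℂ → 0 (with arrows Ψ and Φ) is a short exact sequence: Ψ is injective, Φ is surjective, and the range of Ψ equals the kernel of Φ. -/

import Mathlib

open Filter Topology
open scoped ENNReal TensorProduct Classical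

noncomputable section

/-- The Banach space `ℓ¹(X)` of absolutely summable complex functions on `X`. -/
abbrev l1 (X : Type*) : Type _ := lp (fun _ : X => ℂ) 1

section Defs

variable {I G : Type*} [Group G]

/-- The multiplication of the Brandt semigroup `S = B(I,G) = (I × G × I) ∪ {o}`,
where the zero element `o` is encoded as `none`. -/
def brandtMul : Option (I × G × I) → Option (I × G × I) → Option (I × G × I)
  | some (i, g, j), some (i', g', j') => if j = i' then some (i, g * g', j') else none
  | _, _ => none

/-- Spec: `mul` is the convolution product on `ℓ¹(T)`, `T = I × G × I`:
`(ab)(i,g,j) = Σ_{k ∈ I, h ∈ G} a(i, g h⁻¹, k) b(k, h, j)`. -/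
def IsConvT (mul : l1 (I × G × I) → l1 (I × G × I) → l1 (I × G × I)) : Prop :=
  ∀ (a b : l1 (I × G × I)) (i : I) (g : G) (j : I),
    mul a b (i, g, j) = ∑' p : I × G, a (i, g * p.2⁻¹, p.1) * b (p.1, p.2, j)

/-- Spec: `mul` is the convolution product on the group algebra `ℓ¹(G)`. -/
def IsConvG (mul : l1 G → l1 G → l1 G) : Prop :=
  ∀ (a b : l1 G) (g : G), mul a b g = ∑' h : G, a (g * h⁻¹) * b h

/-- Spec: `act` is the left module action of `ℓ¹(T)` on `ℓ¹(T × T) = ℓ¹(T) ⊗̂ ℓ¹(T)`,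
determined by `a·(x ⊗ y) = (ax) ⊗ y`. -/
def IsLeftActT
    (act : l1 (I × G × I) → l1 ((I × G × I) × (I × G × I)) → l1 ((I × G × I) × (I × G × I))) :
    Prop :=
  ∀ (a : l1 (I × G × I)) (w : l1 ((I × G × I) × (I × G × I))) (i : I) (g : G) (j : I)
    (t' : I × G × I),
    act a w ((i, g, j), t') = ∑' p : I × G, a (i, g * p.2⁻¹, p.1) * w ((p.1, p.2, j), t')

/-- Spec: `act` is the right module action of `ℓ¹(T)` on `ℓ¹(T × T) = ℓ¹(T) ⊗̂ ℓ¹(T)`,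
determined by `(x ⊗ y)·a = x ⊗ (ya)`. -/
def IsRightActT
    (act : l1 ((I × G × I) × (I × G × I)) → l1 (I × G × I) → l1 ((I × G × I) × (I × G × I))) :
    Prop :=
  ∀ (w : l1 ((I × G × I) × (I × G × I))) (a : l1 (I × G × I)) (t : I × G × I) (i : I) (g : G)
    (j : I),
    act w a (t, (i, g, j)) = ∑' p : I × G, w (t, (i, g * p.2⁻¹, p.1)) * a (p.1, p.2, j)

/-- Spec: `d` is the diagonal map `π : ℓ¹(T × T) = ℓ¹(T) ⊗̂ ℓ¹(T) → ℓ¹(T)`,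
determined by `δ_x ⊗ δ_y ↦ δ_x δ_y`. -/
def IsDiagT (d : l1 ((I × G × I) × (I × G × I)) → l1 (I × G × I)) : Prop :=
  ∀ (w : l1 ((I × G × I) × (I × G × I))) (i : I) (g : G) (j : I),
    d w (i, g, j) = ∑' p : I × G, w ((i, g * p.2⁻¹, p.1), (p.1, p.2, j))

/-- Spec: `act` is the left module action of `ℓ¹(G)` on `ℓ¹(G × G) = ℓ¹(G) ⊗̂ ℓ¹(G)`. -/
def IsLeftActG (act : l1 G → l1 (G × G) → l1 (G × G)) : Prop :=
  ∀ (a : l1 G) (w : l1 (G × G)) (g g' : G),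
    act a w (g, g') = ∑' h : G, a (g * h⁻¹) * w (h, g')

/-- Spec: `act` is the right module action of `ℓ¹(G)` on `ℓ¹(G × G) = ℓ¹(G) ⊗̂ ℓ¹(G)`. -/
def IsRightActG (act : l1 (G × G) → l1 G → l1 (G × G)) : Prop :=
  ∀ (w : l1 (G × G)) (a : l1 G) (g g' : G),
    act w a (g, g') = ∑' h : G, w (g, g' * h⁻¹) * a h

/-- Spec: `d` is the diagonal map `π : ℓ¹(G × G) = ℓ¹(G) ⊗̂ ℓ¹(G) → ℓ¹(G)`. -/
def IsDiagG (d : l1 (G × G) → l1 G) : Prop :=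
  ∀ (w : l1 (G × G)) (g : G), d w g = ∑' h : G, w (g * h⁻¹, h)

/-- Spec: `mul` is the convolution product on the semigroup algebra `ℓ¹(S)`, `S = B(I,G)`:
`(ab)(s) = Σ_{u v = s} a(u) b(v)`. -/
def IsConvS (mul : l1 (Option (I × G × I)) → l1 (Option (I × G × I)) →
    l1 (Option (I × G × I))) : Prop :=
  ∀ (a b : l1 (Option (I × G × I))) (s : Option (I × G × I)),
    mul a b s =
      ∑' p : {p : Option (I × G × I) × Option (I × G × I) // brandtMul p.1 p.2 = s},
        a p.val.1 * b p.val.2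

/-- Spec: left module action of `ℓ¹(S)` on `ℓ¹(S × S) = ℓ¹(S) ⊗̂ ℓ¹(S)`. -/
def IsLeftActS (act : l1 (Option (I × G × I)) →
    l1 (Option (I × G × I) × Option (I × G × I)) →
    l1 (Option (I × G × I) × Option (I × G × I))) : Prop :=
  ∀ (a : l1 (Option (I × G × I))) (w : l1 (Option (I × G × I) × Option (I × G × I)))
    (s s' : Option (I × G × I)),
    act a w (s, s') =
      ∑' p : {p : Option (I × G × I) × Option (I × G × I) // brandtMul p.1 p.2 = s},
        a p.val.1 * w (p.val.2, s')

/-- Spec: right module action of `ℓ¹(S)` on `ℓ¹(S × S) = ℓ¹(S) ⊗̂ ℓ¹(S)`. -/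
def IsRightActS (act : l1 (Option (I × G × I) × Option (I × G × I)) →
    l1 (Option (I × G × I)) →
    l1 (Option (I × G × I) × Option (I × G × I))) : Prop :=
  ∀ (w : l1 (Option (I × G × I) × Option (I × G × I))) (a : l1 (Option (I × G × I)))
    (s s' : Option (I × G × I)),
    act w a (s, s') =
      ∑' p : {p : Option (I × G × I) × Option (I × G × I) // brandtMul p.1 p.2 = s'},
        w (s, p.val.1) * a p.val.2

/-- Spec: the diagonal map `π : ℓ¹(S × S) = ℓ¹(S) ⊗̂ ℓ¹(S) → ℓ¹(S)`. -/
def IsDiagS (d : l1 (Option (I × G × I) × Option (I × G × I)) → l1 (Option (I × G × I))) :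
    Prop :=
  ∀ (w : l1 (Option (I × G × I) × Option (I × G × I))) (s : Option (I × G × I)),
    d w s =
      ∑' p : {p : Option (I × G × I) × Option (I × G × I) // brandtMul p.1 p.2 = s},
        w p.val

/-- Spec: `E` sends `b ∈ ℓ¹(G × G)` and `i,j,i',j' ∈ I` to the element
`E^b_{(i,j,i',j')} ∈ ℓ¹(T × T)`. -/
def IsE (E : l1 (G × G) → I → I → I → I → l1 ((I × G × I) × (I × G × I))) : Prop :=
  ∀ (b : l1 (G × G)) (i j i' j' : I),
    (∀ g g' : G, E b i j i' j' ((i, g, j), (i', g', j')) = b (g, g')) ∧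
    (∀ (u v u' v' : I) (g g' : G), (u, v, u', v') ≠ (i, j, i', j') →
      E b i j i' j' ((u, g, v), (u', g', v')) = 0)

/-- Spec: `H` sends `c ∈ ℓ¹(G)` and `i,j ∈ I` to the element `H^c_{(i,j)} ∈ ℓ¹(T)`. -/
def IsH (H : l1 G → I → I → l1 (I × G × I)) : Prop :=
  ∀ (c : l1 G) (i j : I),
    (∀ g : G, H c i j (i, g, j) = c g) ∧
    (∀ (u v : I) (g : G), (u, v) ≠ (i, j) → H c i j (u, g, v) = 0)

/-- Spec: `comp` sends `a ∈ ℓ¹(T)` and `u,v ∈ I` to `a_{(u,v)} ∈ ℓ¹(G)`,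
`a_{(u,v)}(g) = a(u,g,v)`. -/
def IsComp (comp : l1 (I × G × I) → I → I → l1 G) : Prop :=
  ∀ (a : l1 (I × G × I)) (u v : I) (g : G), comp a u v g = a (u, g, v)

/-- The net `W_{F,λ} = (1/#F) Σ_{i,j ∈ F} E^{m_λ}_{(i,j,j,i)}` in `ℓ¹(T × T)`. -/
def Wnet (E : l1 (G × G) → I → I → I → I → l1 ((I × G × I) × (I × G × I)))
    {Λ : Type*} (m : Λ → l1 (G × G)) (F : Finset I) (l : Λ) :
    l1 ((I × G × I) × (I × G × I)) :=
  (F.card : ℂ)⁻¹ • ∑ i ∈ F, ∑ j ∈ F, E (m l) i j j i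

/-- `(m_λ)` is a bounded approximate diagonal for `ℓ¹(G)` (with respect to the given
realizations of the product, the module actions on `ℓ¹(G) ⊗̂ ℓ¹(G) = ℓ¹(G × G)` and
the diagonal map). -/
def IsBddApproxDiagG {Λ : Type*} [Preorder Λ]
    (mulG : l1 G → l1 G → l1 G) (actLG : l1 G → l1 (G × G) → l1 (G × G))
    (actRG : l1 (G × G) → l1 G → l1 (G × G)) (piG : l1 (G × G) → l1 G)
    (m : Λ → l1 (G × G)) : Prop :=
  (∃ M : ℝ, ∀ l, ‖m l‖ ≤ M) ∧
  ∀ c : l1 G,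
    Tendsto (fun l => actLG c (m l) - actRG (m l) c) atTop (𝓝 0) ∧
    Tendsto (fun l => mulG (piG (m l)) c) atTop (𝓝 c)

end Defs

/-- Pseudo-amenability of an `ℓ¹`-type Banach algebra `A = ℓ¹(X)`, whose projective tensor
square `A ⊗̂ A` is realized concretely as `M = ℓ¹(X × X)`: there is a net (equivalently, a
nontrivial filtered family) `w` in `M` such that `a·w_n − w_n·a → 0` and `π(w_n)a → a` for
every `a ∈ A`. -/
def HasApproxDiag {A M : Type*} [NormedAddCommGroup A] [NormedAddCommGroup M]
    (mul : A → A → A) (actL : A → M → M) (actR : M → A → M) (diag : M → A) : Prop :=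
  ∃ (ι : Type*) (F : Filter ι), F.NeBot ∧ ∃ w : ι → M,
    ∀ a : A,
      Tendsto (fun n => actL a (w n) - actR (w n) a) F (𝓝 0) ∧
      Tendsto (fun n => mul (diag (w n)) a) F (𝓝 a)

/-- A discrete group `G` is amenable: there is a left-invariant mean on `ℓ∞(G)`,
i.e. a positive normalized left translation invariant linear functional. -/
def AmenableGroup (G : Type*) [Group G] : Prop :=
  ∃ m : lp (fun _ : G => ℝ) ∞ →ₗ[ℝ] ℝ,
    (∀ f : lp (fun _ : G => ℝ) ∞, (∀ x, 0 ≤ f x) → 0 ≤ m f) ∧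
    (∀ f : lp (fun _ : G => ℝ) ∞, (∀ x, f x = 1) → m f = 1) ∧
    (∀ (g : G) (f f' : lp (fun _ : G => ℝ) ∞), (∀ x, f' x = f (g * x)) → m f' = m f)

/-- The projective tensor seminorm on the algebraic tensor product `A ⊗[ℂ] A`:
the infimum of `Σ ‖x_k‖ ‖y_k‖` over all finite representations `Σ x_k ⊗ y_k`. -/
def projSeminorm (A : Type*) [NormedAddCommGroup A] [NormedSpace ℂ A] (x : A ⊗[ℂ] A) : ℝ :=
  sInf {r : ℝ | ∃ (n : ℕ) (f : Fin n → A × A),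
    x = ∑ k, (f k).1 ⊗ₜ[ℂ] (f k).2 ∧ r = ∑ k, ‖(f k).1‖ * ‖(f k).2‖}

/-- A Banach algebra `A` is pseudo-amenable: there is a net (equivalently, a nontrivial
filtered family) `(w_n)` in `A ⊗̂ A` with `a·w_n − w_n·a → 0` and `π(w_n)a → a` for every
`a ∈ A`, where `π` is the diagonal map and `A ⊗̂ A` carries the projective tensor seminorm. -/
def PseudoAmenable (A : Type*) [NonUnitalNormedRing A] [NormedSpace ℂ A]
    [SMulCommClass ℂ A A] [IsScalarTower ℂ A A] : Prop :=
  ∃ (ι : Type*) (F : Filter ι), F.NeBot ∧ ∃ w : ι → A ⊗[ℂ] A,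
    ∀ a : A,
      Tendsto (fun n => projSeminorm A
        (TensorProduct.map (LinearMap.mulLeft ℂ a) LinearMap.id (w n) -
          TensorProduct.map LinearMap.id (LinearMap.mulRight ℂ a) (w n))) F (𝓝 0) ∧
      Tendsto (fun n => LinearMap.mul' ℂ A (w n) * a) F (𝓝 a)


lemma l1.summable_norm {X : Type*} (a : l1 X) : Summable fun x => ‖a x‖ := by
  have h := (lp.memℓp a).summable (by norm_num : (0:ℝ) < (1 : ℝ≥0∞).toReal)
  simpa using h

lemma l1.summable' {X : Type*} (a : l1 X) : Summable fun x => a x :=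
  (l1.summable_norm a).of_norm

lemma l1.norm_eq {X : Type*} (a : l1 X) : ‖a‖ = ∑' x, ‖a x‖ := by
  rw [lp.norm_eq_tsum_rpow (by norm_num) a]
  simp

lemma tsum_option' {α β : Type*} [AddCommGroup α] [UniformSpace α] [IsUniformAddGroup α]
    [T2Space α] (f : Option β → α) (hf : Summable f) :
    ∑' o, f o = f none + ∑' b, f (some b) := by
  rw [Summable.tsum_eq_add_tsum_ite hf none]
  congr 1
  have hsupp : Function.support (fun x : Option β => if x = none then 0 else f x)
      ⊆ Set.range (Option.some : β → Option β) := by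
    intro x hx
    cases x with
    | none => simp at hx
    | some b => exact ⟨b, rfl⟩
  rw [← Function.Injective.tsum_eq (Option.some_injective β) hsupp]
  simp

@[simp] lemma brandtMul_some_some {I G : Type*} [Group G] (i : I) (g : G) (j i' : I) (g' : G)
    (j' : I) :
    brandtMul (some (i,g,j)) (some (i',g',j')) = if j = i' then some (i, g*g', j') else none := rfl

@[simp] lemma brandtMul_none_left {I G : Type*} [Group G] (v : Option (I×G×I)) :
    brandtMul none v = none := by cases v <;> rfl

@[simp] lemma brandtMul_none_right {I G : Type*} [Group G] (u : Option (I×G×I)) :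
    brandtMul u none = none := by rcases u with _ | ⟨i,g,j⟩ <;> rfl

def fiberEquiv {I G : Type*} [Group G] (i : I) (g : G) (j : I) :
    (I × G) ≃ {p : Option (I×G×I) × Option (I×G×I) // brandtMul p.1 p.2 = some (i,g,j)} :=
  Equiv.ofBijective
    (fun q => ⟨(some (i, g * q.2⁻¹, q.1), some (q.1, q.2, j)), by simp⟩)
    ⟨by
      rintro ⟨k, h⟩ ⟨k', h'⟩ hq
      simp only [Subtype.mk.injEq, Prod.mk.injEq, Option.some.injEq] at hq
      obtain ⟨⟨-, -, h1⟩, h2, h3, -⟩ := hq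
      exact Prod.ext h1 h3,
     by
      rintro ⟨⟨u, v⟩, hp⟩
      rcases u with _ | ⟨a, g1, b⟩
      · simp at hp
      rcases v with _ | ⟨c, g2, d⟩
      · simp at hp
      by_cases hbc : b = c
      · subst hbc
        simp only [brandtMul_some_some, if_pos rfl, Option.some.injEq, Prod.mk.injEq] at hp
        obtain ⟨rfl, rfl, rfl⟩ := hp
        exact ⟨(b, g2), by simp [mul_inv_cancel_right]⟩
      · simp [brandtMul, hbc] at hp⟩

lemma sum_fibers {I G : Type*} [Group G] (a b : l1 (Option (I × G × I))) :
    Summable (fun s : Option (I×G×I) =>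
      ∑' p : {p : Option (I×G×I) × Option (I×G×I) // brandtMul p.1 p.2 = s},
        a p.val.1 * b p.val.2) ∧
    (∑' s : Option (I×G×I),
      ∑' p : {p : Option (I×G×I) × Option (I×G×I) // brandtMul p.1 p.2 = s},
        a p.val.1 * b p.val.2)
      = (∑' s, a s) * (∑' s, b s) := by
  have hf : Summable (fun p : Option (I×G×I) × Option (I×G×I) => a p.1 * b p.2) :=
    summable_mul_of_summable_norm (l1.summable_norm a) (l1.summable_norm b)
  let e := Equiv.sigmaFiberEquiv (fun p : Option (I×G×I) × Option (I×G×I) => brandtMul p.1 p.2)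
  have hs : Summable (fun q : Σ s : Option (I×G×I),
      {p : Option (I×G×I) × Option (I×G×I) // brandtMul p.1 p.2 = s} =>
      a (e q).1 * b (e q).2) := e.summable_iff.mpr hf
  refine ⟨hs.sigma, ?_⟩
  calc (∑' s, ∑' p : {p : Option (I×G×I) × Option (I×G×I) // brandtMul p.1 p.2 = s},
        a p.val.1 * b p.val.2)
      = ∑' q : Σ s : Option (I×G×I),
          {p : Option (I×G×I) × Option (I×G×I) // brandtMul p.1 p.2 = s},
          a (e q).1 * b (e q).2 := (Summable.tsum_sigma hs).symm
    _ = ∑' p : Option (I×G×I) × Option (I×G×I), a p.1 * b p.2 :=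
        e.tsum_eq (fun p => a p.1 * b p.2)
    _ = (∑' s, a s) * (∑' s, b s) :=
        (tsum_mul_tsum_of_summable_norm (l1.summable_norm a) (l1.summable_norm b)).symm
theorem brandt_l1_short_exact {G : Type*} [Group G] {I : Type*} [Nonempty I]
    (mulS : l1 (Option (I × G × I)) → l1 (Option (I × G × I)) → l1 (Option (I × G × I)))
    (hmulS : IsConvS mulS)
    (mulT : l1 (I × G × I) → l1 (I × G × I) → l1 (I × G × I))
    (hmulT : IsConvT mulT)
    (Ψ : l1 (I × G × I) → l1 (Option (I × G × I)))
    (hΨ : ∀ (b : l1 (I × G × I)) (t : I × G × I), Ψ b (some t) = b t)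
    (hΨo : ∀ b : l1 (I × G × I), Ψ b none = -∑' t : I × G × I, b t)
    (Φ : l1 (Option (I × G × I)) → ℂ)
    (hΦ : ∀ a : l1 (Option (I × G × I)), Φ a = ∑' s : Option (I × G × I), a s) :
    Continuous Ψ ∧ (∀ x y, Ψ (x + y) = Ψ x + Ψ y) ∧ (∀ (c : ℂ) x, Ψ (c • x) = c • Ψ x) ∧
    (∀ x y, Ψ (mulT x y) = mulS (Ψ x) (Ψ y)) ∧
    Continuous Φ ∧ (∀ x y, Φ (x + y) = Φ x + Φ y) ∧ (∀ (c : ℂ) x, Φ (c • x) = c • Φ x) ∧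
    (∀ x y, Φ (mulS x y) = Φ x * Φ y) ∧
    Function.Injective Ψ ∧ Function.Surjective Φ ∧
    Set.range Ψ = {a | Φ a = 0} := by
  have hzero : ∀ z : l1 (I × G × I), (∑' s : Option (I × G × I), Ψ z s) = 0 := by
    intro z
    rw [tsum_option' _ (l1.summable' (Ψ z)), hΨo, tsum_congr (fun t => hΨ z t)]
    ring
  have key : ∀ (x y : l1 (I × G × I)) (i : I) (g : G) (j : I),
      (∑' p : {p : Option (I × G × I) × Option (I × G × I) // brandtMul p.1 p.2 = some (i, g, j)},
        Ψ x p.val.1 * Ψ y p.val.2) = mulT x y (i, g, j) := by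
    intro x y i g j
    rw [hmulT, ← (fiberEquiv i g j).tsum_eq (fun p => Ψ x p.val.1 * Ψ y p.val.2)]
    exact tsum_congr fun q => by
      show Ψ x (some (i, g * q.2⁻¹, q.1)) * Ψ y (some (q.1, q.2, j)) = _
      rw [hΨ, hΨ]
  have hΨadd : ∀ x y, Ψ (x + y) = Ψ x + Ψ y := by
    intro x y
    refine lp.ext (funext fun s => ?_)
    have hco : (Ψ x + Ψ y) s = Ψ x s + Ψ y s := by rw [lp.coeFn_add]; rfl
    cases s with
    | some t =>
      rw [hΨ, hco, hΨ, hΨ]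
      rw [lp.coeFn_add]; rfl
    | none =>
      rw [hco, hΨo, hΨo, hΨo,
        tsum_congr (fun t => show ((x + y : l1 (I × G × I))) t = x t + y t by
          rw [lp.coeFn_add]; rfl),
        Summable.tsum_add (l1.summable' x) (l1.summable' y)]
      ring
  have hΨsmul : ∀ (c : ℂ) x, Ψ (c • x) = c • Ψ x := by
    intro c x
    refine lp.ext (funext fun s => ?_)
    have hco : (c • Ψ x) s = c * Ψ x s := by rw [lp.coeFn_smul]; rfl
    cases s with
    | some t =>
      rw [hΨ, hco, hΨ]
      rw [lp.coeFn_smul]; rfl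
    | none =>
      rw [hco, hΨo, hΨo,
        tsum_congr (fun t => show ((c • x : l1 (I × G × I))) t = c * x t by
          rw [lp.coeFn_smul]; rfl),
        tsum_mul_left]
      ring
  have hΨbound : ∀ x, ‖Ψ x‖ ≤ 2 * ‖x‖ := by
    intro x
    have h1 : ‖Ψ x‖ = ‖Ψ x none‖ + ∑' t : I × G × I, ‖Ψ x (some t)‖ := by
      rw [l1.norm_eq, tsum_option' _ (l1.summable_norm (Ψ x))]
    have h2 : (∑' t : I × G × I, ‖Ψ x (some t)‖) = ‖x‖ := by
      rw [l1.norm_eq]; exact tsum_congr fun t => by rw [hΨ]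
    have h3 : ‖Ψ x none‖ ≤ ‖x‖ := by
      rw [hΨo, norm_neg, l1.norm_eq]
      exact norm_tsum_le_tsum_norm (l1.summable_norm x)
    calc ‖Ψ x‖ = ‖Ψ x none‖ + ∑' t : I × G × I, ‖Ψ x (some t)‖ := h1
      _ ≤ ‖x‖ + ‖x‖ := add_le_add h3 (le_of_eq h2)
      _ = 2 * ‖x‖ := by ring
  have hΨcont : Continuous Ψ := by
    let LΨ : l1 (I × G × I) →ₗ[ℂ] l1 (Option (I × G × I)) :=
      { toFun := Ψ, map_add' := hΨadd, map_smul' := hΨsmul }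
    exact (LinearMap.mkContinuous LΨ 2 hΨbound).continuous
  have hΨmul : ∀ x y, Ψ (mulT x y) = mulS (Ψ x) (Ψ y) := by
    intro x y
    refine lp.ext (funext fun s => ?_)
    cases s with
    | some t =>
      obtain ⟨i, g, j⟩ := t
      rw [hmulS, hΨ, key x y i g j]
    | none =>
      rw [hmulS, hΨo]
      obtain ⟨hsum, htot⟩ := sum_fibers (Ψ x) (Ψ y)
      have h0 : (∑' s : Option (I × G × I),
          ∑' p : {p : Option (I × G × I) × Option (I × G × I) // brandtMul p.1 p.2 = s},
            Ψ x p.val.1 * Ψ y p.val.2) = 0 := by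
        rw [htot, hzero x, hzero y, mul_zero]
      rw [tsum_option' _ hsum] at h0
      have h1 : (∑' t : I × G × I,
          ∑' p : {p : Option (I × G × I) × Option (I × G × I) // brandtMul p.1 p.2 = some t},
            Ψ x p.val.1 * Ψ y p.val.2) = ∑' t : I × G × I, mulT x y t :=
        tsum_congr fun t => by obtain ⟨i, g, j⟩ := t; exact key x y i g j
      linear_combination h1 - h0
  have hΦadd : ∀ x y, Φ (x + y) = Φ x + Φ y := by
    intro x y
    rw [hΦ, hΦ, hΦ, ← Summable.tsum_add (l1.summable' x) (l1.summable' y)]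
    exact tsum_congr fun s => by rw [lp.coeFn_add]; rfl
  have hΦsmul : ∀ (c : ℂ) x, Φ (c • x) = c • Φ x := by
    intro c x
    rw [hΦ, hΦ, smul_eq_mul, ← tsum_mul_left]
    exact tsum_congr fun s => by rw [lp.coeFn_smul]; rfl
  have hΦbound : ∀ a, ‖Φ a‖ ≤ 1 * ‖a‖ := by
    intro a
    rw [one_mul, hΦ, l1.norm_eq]
    exact norm_tsum_le_tsum_norm (l1.summable_norm a)
  have hΦcont : Continuous Φ := by
    let LΦ : l1 (Option (I × G × I)) →ₗ[ℂ] ℂ :=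
      { toFun := Φ, map_add' := hΦadd, map_smul' := hΦsmul }
    exact (LinearMap.mkContinuous LΦ 1 hΦbound).continuous
  have hΦmul : ∀ x y, Φ (mulS x y) = Φ x * Φ y := by
    intro x y
    rw [hΦ, hΦ, hΦ, ← (sum_fibers x y).2]
    exact tsum_congr fun s => hmulS x y s
  have hΨinj : Function.Injective Ψ := fun x y h =>
    lp.ext (funext fun t => by rw [← hΨ x t, ← hΨ y t, h])
  have hΦsurj : Function.Surjective Φ := by
    intro c
    refine ⟨c • lp.single 1 none 1, ?_⟩
    rw [hΦ, tsum_eq_single none ?_]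
    · rw [lp.coeFn_smul]
      simp [lp.single_apply_self]
    · intro s hs
      rw [lp.coeFn_smul]
      simp [lp.single_apply_ne _ _ _ hs, Pi.single_apply, hs]
  refine ⟨hΨcont, hΨadd, hΨsmul, hΨmul, hΦcont, hΦadd, hΦsmul, hΦmul, hΨinj, hΦsurj, ?_⟩
  ext a
  simp only [Set.mem_range, Set.mem_setOf_eq]
  constructor
  · rintro ⟨b, rfl⟩
    rw [hΦ]
    exact hzero b
  · intro ha
    have hmem : Memℓp (fun t : I × G × I => a (some t)) 1 := memℓp_gen (by
      simpa [Function.comp_def] using ((l1.summable_norm a).comp_injective (Option.some_injective _)))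
    refine ⟨⟨_, hmem⟩, ?_⟩
    refine lp.ext (funext fun s => ?_)
    cases s with
    | some t => rw [hΨ]
    | none =>
      rw [hΨo]
      have h0 : a none + ∑' t : I × G × I, a (some t) = 0 := by
        rw [← tsum_option' _ (l1.summable' a), ← hΦ]
        exact ha
      have h1 : (∑' t : I × G × I, (⟨_, hmem⟩ : l1 (I × G × I)) t)
          = ∑' t : I × G × I, a (some t) := rfl
      rw [h1]
      linear_combination -h0

end
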